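/- Lemma 4.1 (mountain-pass geometry, lower bound): let p, q ≥ 2, λ > 0, suppose μ(x) ≥ μ0 > 0 and h1(x), h2(x) ≥ h0 > 0 for all x ∈ V, let e1 ∈ L^{p/(p−1)}(V), e2 ∈ L^{q/(q−1)}(V), and let F : V × ℝ² → ℝ be continuously differentiable in (s,t) with F(x,0,0) = 0 and satisfying (C1): there is l0 > 0 such that |F_s(x,s,t)| ≤ (h0/(q+1))(|s|^{p−1}+|t|^{q(p−1)/p}) and |F_t(x,s,t)| ≤ (h0/(q+1))(|s|^p+|t|^{q−1}) for all x ∈ V and all (s,t) with |(s,t)| < l0. Set Λ0 = min{ (l0/2)·min{(h0μ0)^{1/p}, (h0μ0)^{1/q}}, 1 }. Then for every (u,v) with ‖(u,v)‖_W := ‖u‖_{W_{h1}^{1,p}} + ‖v‖_{W_{h2}^{1,q}} ≤ Λ0, the energy satisfies φ_λ(u,v) ≥ (min{1,q−1}/(2^{max{p,q}−1}(pq+p)))·‖(u,v)‖_W^{max{p,q}} − λ·max{h0^{−1/p}‖e1‖_{L^{p/(p−1)}(V)}, h0^{−1/q}‖e2‖_{L^{q/(q−1)}(V)}}·‖(u,v)‖_W.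 -/

import Mathlib

open scoped BigOperators
open Filter Topology

/-- A locally finite weighted graph: `ω x y ≠ 0` encodes the edge relation `x ∼ y`,
edge weights are symmetric and nonnegative, `μ` is a positive vertex measure, and every
vertex has finitely many neighbors. -/
structure WGraph (V : Type*) where
  ω : V → V → ℝ
  μ : V → ℝ
  symm : ∀ x y, ω x y = ω y x
  loopless : ∀ x, ω x x = 0
  weight_nonneg : ∀ x y, 0 ≤ ω x y
  mu_pos : ∀ x, 0 < μ x
  locFin : ∀ x, {y | ω x y ≠ 0}.Finite

namespace WGraph

variable {V : Type*}

/-- The gradient form `Γ(u,v)(x)`. -/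
noncomputable def gamma (G : WGraph V) (u v : V → ℝ) (x : V) : ℝ :=
  (1 / (2 * G.μ x)) * ∑' y, G.ω x y * (u y - u x) * (v y - v x)

/-- The length of the gradient `|∇u|(x)`. -/
noncomputable def grad (G : WGraph V) (u : V → ℝ) (x : V) : ℝ :=
  Real.sqrt (G.gamma u u x)

/-- The graph `p`-Laplacian `Δ_p u (x)`. -/
noncomputable def lapP (G : WGraph V) (p : ℝ) (u : V → ℝ) (x : V) : ℝ :=
  (1 / (2 * G.μ x)) *
    ∑' y, (G.grad u y ^ (p - 2) + G.grad u x ^ (p - 2)) * (G.ω x y * (u y - u x))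

/-- The degree `deg(x) = ∑_{y ∼ x} ω_{xy}`. -/
noncomputable def deg (G : WGraph V) (x : V) : ℝ := ∑' y, G.ω x y

/-- The underlying simple graph: `x ∼ y` iff `ω x y ≠ 0`. -/
def toSimpleGraph (G : WGraph V) : SimpleGraph V where
  Adj x y := G.ω x y ≠ 0
  symm := by
    constructor
    intro x y hxy
    try dsimp only at hxy ⊢
    rw [G.symm]
    exact hxy
  loopless := by
    constructor
    intro x hx
    exact hx (G.loopless x)

/-- The graph distance `dist(x,y)`: the minimal number of edges joining `x` and `y`. -/
noncomputable def dist (G : WGraph V) (x y : V) : ℕ := (G.toSimpleGraph).dist x y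

/-- `∑_{x∈V} μ(x)(|∇u|^s(x) + h(x)|u(x)|^s)`, the `s`-th power of the `W_h^{1,s}(V)` norm. -/
noncomputable def sobSum (G : WGraph V) (h : V → ℝ) (s : ℝ) (u : V → ℝ) : ℝ :=
  ∑' x, G.μ x * (G.grad u x ^ s + h x * |u x| ^ s)

/-- Finiteness of the Sobolev sum, i.e. membership in `W_h^{1,s}(V)`. -/
def SobSummable (G : WGraph V) (h : V → ℝ) (s : ℝ) (u : V → ℝ) : Prop :=
  Summable fun x => G.μ x * (G.grad u x ^ s + h x * |u x| ^ s)

/-- The `W_h^{1,s}(V)` norm. -/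
noncomputable def sobNorm (G : WGraph V) (h : V → ℝ) (s : ℝ) (u : V → ℝ) : ℝ :=
  (G.sobSum h s u) ^ (1 / s)

/-- Membership in `L^r(V)`. -/
def MemLpV (G : WGraph V) (r : ℝ) (g : V → ℝ) : Prop :=
  Summable fun x => G.μ x * |g x| ^ r

/-- The `L^r(V)` norm. -/
noncomputable def lpNorm (G : WGraph V) (r : ℝ) (g : V → ℝ) : ℝ :=
  (∑' x, G.μ x * |g x| ^ r) ^ (1 / r)

/-- The energy functional `φ_λ(u,v)` associated with the `(p,q)`-Laplacian system. -/
noncomputable def energy (G : WGraph V) (p q lam : ℝ) (h1 h2 e1 e2 : V → ℝ)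
    (F : V → ℝ → ℝ → ℝ) (u v : V → ℝ) : ℝ :=
  (1 / p) * G.sobSum h1 p u + (1 / q) * G.sobSum h2 q v
    - ∑' x, G.μ x * F x (u x) (v x)
    - lam * ∑' x, G.μ x * (e1 x * u x + e2 x * v x)

/-- The energy functional `φ_ε(u)` associated with the scalar `p`-Laplacian equation. -/
noncomputable def energyScalar (G : WGraph V) (p eps : ℝ) (h e : V → ℝ)
    (F : V → ℝ → ℝ) (u : V → ℝ) : ℝ :=
  (1 / p) * G.sobSum h p u - ∑' x, G.μ x * F x (u x) - eps * ∑' x, G.μ x * (e x * u x)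

end WGraph

/-- `F(x,s,t)` is continuously differentiable in `(s,t)`, with partial derivatives
`Fs` and `Ft`. -/
def IsC1Pair {V : Type*} (F Fs Ft : V → ℝ → ℝ → ℝ) : Prop :=
  ∀ x : V,
    (∀ s t : ℝ, HasDerivAt (fun z => F x z t) (Fs x s t) s) ∧
    (∀ s t : ℝ, HasDerivAt (fun z => F x s z) (Ft x s t) t) ∧
    Continuous (fun st : ℝ × ℝ => Fs x st.1 st.2) ∧
    Continuous (fun st : ℝ × ℝ => Ft x st.1 st.2)

/-- `F(x,s)` is continuously differentiable in `s`, with derivative `Fs`. -/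
def IsC1Scalar {V : Type*} (F Fs : V → ℝ → ℝ) : Prop :=
  ∀ x : V, (∀ s : ℝ, HasDerivAt (F x) (Fs x s) s) ∧ Continuous (Fs x)


section AuxLemmas
open Real
open scoped NNReal


lemma aux_two_pow {M : ℝ} (hM : 1 ≤ M) {a b : ℝ} (ha : 0 ≤ a) (hb : 0 ≤ b) :
    (a + b) ^ M ≤ 2 ^ (M - 1) * (a ^ M + b ^ M) := by
  lift a to ℝ≥0 using ha
  lift b to ℝ≥0 using hb
  have key := NNReal.rpow_arith_mean_le_arith_mean2_rpow (1/2) (1/2) a b (add_halves 1) hM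
  have keyR : ((1/2:ℝ) * a + 1/2 * b) ^ M ≤ 1/2 * (a:ℝ) ^ M + 1/2 * (b:ℝ) ^ M := by
    exact_mod_cast key
  have habM : (0:ℝ) ≤ 1/2 * a + 1/2 * b := by positivity
  have hsplit : (2:ℝ) ^ M = 2 ^ (M - 1) * 2 := by
    rw [show M = (M - 1) + 1 by ring, Real.rpow_add_one two_ne_zero]
    ring_nf
  calc ((a:ℝ) + b) ^ M = (2 * ((1/2) * a + (1/2) * b)) ^ M := by congr 1; ring
    _ = 2 ^ M * ((1/2) * (a:ℝ) + (1/2) * b) ^ M := Real.mul_rpow (by norm_num) habM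
    _ ≤ 2 ^ M * (1/2 * (a:ℝ) ^ M + 1/2 * (b:ℝ) ^ M) :=
        mul_le_mul_of_nonneg_left keyR (Real.rpow_nonneg (by norm_num) M)
    _ = 2 ^ (M - 1) * ((a:ℝ) ^ M + (b:ℝ) ^ M) := by rw [hsplit]; ring

lemma aux_mvt_nonneg {p c K : ℝ} (hp : 1 ≤ p) (hc : 0 ≤ c) (hK : 0 ≤ K)
    {φ φd : ℝ → ℝ} (hφ : ∀ r, HasDerivAt φ (φd r) r)
    {s : ℝ} (hs : 0 ≤ s) (hbound : ∀ r, 0 ≤ r → r ≤ s → |φd r| ≤ c * r ^ (p - 1) + K) :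
    |φ s - φ 0| ≤ c * s ^ p / p + K * s := by
  have hp0 : (0:ℝ) < p := by linarith
  set ρ : ℝ → ℝ := fun r => c * r ^ p / p + K * r with hρ
  have hρcont : Continuous ρ := by
    have h1 : Continuous fun r : ℝ => r ^ p := Real.continuous_rpow_const hp0.le
    exact (((continuous_const.mul h1).div_const p).add (continuous_const.mul continuous_id))
  have hρd : ∀ r : ℝ, r ≠ 0 → HasDerivAt ρ (c * r ^ (p - 1) + K) r := by
    intro r hr
    have h1 := Real.hasDerivAt_rpow_const (p := p) (Or.inl hr)
    have h2 : HasDerivAt (fun r : ℝ => c * r ^ p / p) (c * (p * r ^ (p - 1)) / p) r :=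
      (h1.const_mul c).div_const p
    have h3 : HasDerivAt (fun r : ℝ => K * r) (K * 1) r := (hasDerivAt_id r).const_mul K
    have := h2.add h3
    refine this.congr_deriv ?_
    field_simp
  have key : ∀ ψ ψd : ℝ → ℝ, (∀ r, HasDerivAt ψ (ψd r) r) →
      (∀ r, 0 < r → r < s → ψd r ≤ c * r ^ (p - 1) + K) →
      ψ s - ψ 0 ≤ c * s ^ p / p + K * s := by
    intro ψ ψd hψ hb
    have hψc : Continuous ψ := by
      apply continuous_iff_continuousAt.2
      exact fun r => (hψ r).continuousAt
    have hmono : MonotoneOn (fun r => ρ r - ψ r) (Set.Icc 0 s) := by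
      apply monotoneOn_of_deriv_nonneg (convex_Icc 0 s)
      · exact (hρcont.sub hψc).continuousOn
      · intro r hr
        rw [interior_Icc] at hr
        exact ((hρd r (ne_of_gt hr.1)).sub (hψ r)).differentiableAt.differentiableWithinAt
      · intro r hr
        rw [interior_Icc] at hr
        show 0 ≤ deriv (ρ - ψ) r
        rw [((hρd r (ne_of_gt hr.1)).sub (hψ r)).deriv]
        have := hb r hr.1 hr.2
        linarith
    have h0s := hmono (Set.left_mem_Icc.2 hs) (Set.right_mem_Icc.2 hs) hs
    have hρ0 : ρ 0 = 0 := by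
      simp [hρ, Real.zero_rpow (ne_of_gt hp0)]
    simp only at h0s
    rw [hρ0] at h0s
    have : ψ s - ψ 0 ≤ ρ s := by linarith
    simpa [hρ] using this
  have h1 := key φ φd hφ (fun r h0 h1 => by
    have := hbound r h0.le h1.le
    exact le_trans (le_abs_self _) this)
  have h2 : -φ s - -φ 0 ≤ c * s ^ p / p + K * s :=
    key (fun r => -φ r) (fun r => -φd r) (fun r => (hφ r).neg) (fun r h0 h1 => by
      show -φd r ≤ c * r ^ (p - 1) + K
      have := hbound r h0.le h1.le
      have h3 : -φd r ≤ |φd r| := neg_le_abs _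
      linarith)
  rw [abs_le]
  exact ⟨by linarith, by linarith⟩

lemma aux_mvt {p c K : ℝ} (hp : 1 ≤ p) (hc : 0 ≤ c) (hK : 0 ≤ K)
    {φ φd : ℝ → ℝ} (hφ : ∀ r, HasDerivAt φ (φd r) r)
    (s : ℝ) (hbound : ∀ r, |r| ≤ |s| → |φd r| ≤ c * |r| ^ (p - 1) + K) :
    |φ s - φ 0| ≤ c * |s| ^ p / p + K * |s| := by
  rcases le_or_gt 0 s with hs | hs
  · rw [abs_of_nonneg hs]
    refine aux_mvt_nonneg hp hc hK hφ hs (fun r h0 h1 => ?_)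
    have := hbound r (by rw [abs_of_nonneg h0, abs_of_nonneg hs]; exact h1)
    rwa [abs_of_nonneg h0] at this
  · have hφn : ∀ r, HasDerivAt (fun z => φ (-z)) (φd (-r) * (-1)) r := by
      intro r
      exact HasDerivAt.comp r (hφ (-r)) (hasDerivAt_neg r)
    have hns : 0 ≤ -s := by linarith
    have key : |φ (- -s) - φ (-0)| ≤ c * (-s) ^ p / p + K * (-s) :=
      aux_mvt_nonneg hp hc hK hφn hns (fun r h0 h1 => by
        show |φd (-r) * (-1)| ≤ c * r ^ (p - 1) + K
        rw [abs_mul]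
        have habs : |(-1 : ℝ)| = 1 := by norm_num
        rw [habs, mul_one]
        have := hbound (-r) (by rw [abs_neg, abs_of_nonneg h0, abs_of_neg hs]; exact h1)
        rwa [abs_neg, abs_of_nonneg h0] at this)
    rw [neg_neg, neg_zero] at key
    rw [abs_of_neg hs]
    exact key

lemma aux_holder {V : Type*} {μ e w : V → ℝ} {r r' : ℝ} (hrr' : r.HolderConjugate r')
    (hμ : ∀ x, 0 < μ x) (he : ∀ x, 0 ≤ e x) (hw : ∀ x, 0 ≤ w x)
    (hsum1 : Summable fun x => μ x * e x ^ r') (hsum2 : Summable fun x => μ x * w x ^ r) :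
    (Summable fun x => μ x * (e x * w x)) ∧
    ∑' x, μ x * (e x * w x) ≤
      (∑' x, μ x * e x ^ r') ^ (1/r') * (∑' x, μ x * w x ^ r) ^ (1/r) := by
  have h1 : ∀ x, (μ x ^ (1/r') * e x) ^ r' = μ x * e x ^ r' := fun x => by
    rw [Real.mul_rpow (Real.rpow_nonneg (hμ x).le _) (he x), ← Real.rpow_mul (hμ x).le,
      one_div, inv_mul_cancel₀ hrr'.symm.ne_zero, Real.rpow_one]
  have h2 : ∀ x, (μ x ^ (1/r) * w x) ^ r = μ x * w x ^ r := fun x => by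
    rw [Real.mul_rpow (Real.rpow_nonneg (hμ x).le _) (hw x), ← Real.rpow_mul (hμ x).le,
      one_div, inv_mul_cancel₀ hrr'.ne_zero, Real.rpow_one]
  have h3 : ∀ x, (μ x ^ (1/r') * e x) * (μ x ^ (1/r) * w x) = μ x * (e x * w x) := fun x => by
    rw [mul_mul_mul_comm, ← Real.rpow_add (hμ x),
      show 1/r' + 1/r = 1 by rw [one_div, one_div, add_comm]; exact hrr'.inv_add_inv_eq_one,
      Real.rpow_one]
  have key := Real.summable_and_inner_le_Lp_mul_Lq_tsum_of_nonneg (f := fun x => μ x ^ (1/r') * e x)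
    (g := fun x => μ x ^ (1/r) * w x) hrr'.symm
    (fun x => mul_nonneg (Real.rpow_nonneg (hμ x).le _) (he x))
    (fun x => mul_nonneg (Real.rpow_nonneg (hμ x).le _) (hw x))
    (by simpa only [h1] using hsum1) (by simpa only [h2] using hsum2)
  obtain ⟨k1, k2⟩ := key
  constructor
  · simpa only [h3] using k1
  · simp only [h1, h2] at k2
    simpa only [h3] using k2

end AuxLemmas

set_option maxHeartbeats 2000000 in
/-- Lemma 4.1: under (H1) and (C1), for every `(u,v)` in the ball
`‖(u,v)‖_W ≤ Λ0` the energy functional `φ_λ` is well defined and satisfies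
`φ_λ(u,v) ≥ (min{1,q−1}/(2^{max{p,q}−1}(pq+p)))‖(u,v)‖_W^{max{p,q}}
  − λ·max{h0^{−1/p}‖e1‖, h0^{−1/q}‖e2‖}·‖(u,v)‖_W`. -/
theorem lemma_4_1 {V : Type*} (G : WGraph V)
    (μ0 h0 : ℝ) (hμ0 : 0 < μ0) (hh0 : 0 < h0) (hμ : ∀ x, μ0 ≤ G.μ x)
    (p q lam : ℝ) (hp : 2 ≤ p) (hq : 2 ≤ q) (hlam : 0 < lam)
    (h1 h2 : V → ℝ) (hh1 : ∀ x, h0 ≤ h1 x) (hh2 : ∀ x, h0 ≤ h2 x)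
    (e1 e2 : V → ℝ) (he1L : G.MemLpV (p / (p - 1)) e1) (he2L : G.MemLpV (q / (q - 1)) e2)
    (F Fs Ft : V → ℝ → ℝ → ℝ) (hC1 : IsC1Pair F Fs Ft) (hF00 : ∀ x, F x 0 0 = 0)
    (l0 : ℝ) (hl0 : 0 < l0)
    (hFs : ∀ x s t, Real.sqrt (s ^ 2 + t ^ 2) < l0 →
      |Fs x s t| ≤ (h0 / (q + 1)) * (|s| ^ (p - 1) + |t| ^ (q * (p - 1) / p)))
    (hFt : ∀ x s t, Real.sqrt (s ^ 2 + t ^ 2) < l0 →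
      |Ft x s t| ≤ (h0 / (q + 1)) * (|s| ^ p + |t| ^ (q - 1)))
    (u v : V → ℝ) (hu : G.SobSummable h1 p u) (hv : G.SobSummable h2 q v)
    (hball : G.sobNorm h1 p u + G.sobNorm h2 q v ≤
      min (l0 / 2 * min ((h0 * μ0) ^ (1 / p)) ((h0 * μ0) ^ (1 / q))) 1) :
    (Summable fun x => G.μ x * F x (u x) (v x)) ∧
    (Summable fun x => G.μ x * (e1 x * u x + e2 x * v x)) ∧
    G.energy p q lam h1 h2 e1 e2 F u v ≥
      (min 1 (q - 1) / (2 ^ (max p q - 1) * (p * q + p))) *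
          (G.sobNorm h1 p u + G.sobNorm h2 q v) ^ (max p q)
        - lam * max (h0 ^ (-(1 / p)) * G.lpNorm (p / (p - 1)) e1)
            (h0 ^ (-(1 / q)) * G.lpNorm (q / (q - 1)) e2)
          * (G.sobNorm h1 p u + G.sobNorm h2 q v) := by
  have hp0 : (0:ℝ) < p := by linarith
  have hq0 : (0:ℝ) < q := by linarith
  have hp1 : (1:ℝ) < p := by linarith
  have hq1 : (1:ℝ) < q := by linarith
  have hpne : p ≠ 0 := ne_of_gt hp0
  have hqne : q ≠ 0 := ne_of_gt hq0
  have hq1ne : q + 1 ≠ 0 := by positivity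
  have hh0ne : h0 ≠ 0 := ne_of_gt hh0
  set c := h0 / (q + 1) with hcdef
  have hc : 0 < c := by rw [hcdef]; positivity
  set Sp := G.sobSum h1 p u with hSpdef
  set Sq := G.sobSum h2 q v with hSqdef
  set A := G.sobNorm h1 p u with hAdef
  set B := G.sobNorm h2 q v with hBdef
  have htermp : ∀ x, 0 ≤ G.μ x * (G.grad u x ^ p + h1 x * |u x| ^ p) := fun x => by
    have h1x : 0 < h1 x := lt_of_lt_of_le hh0 (hh1 x)
    exact mul_nonneg (G.mu_pos x).le (add_nonneg (Real.rpow_nonneg (Real.sqrt_nonneg _) p)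
      (mul_nonneg h1x.le (Real.rpow_nonneg (abs_nonneg _) p)))
  have htermq : ∀ x, 0 ≤ G.μ x * (G.grad v x ^ q + h2 x * |v x| ^ q) := fun x => by
    have h2x : 0 < h2 x := lt_of_lt_of_le hh0 (hh2 x)
    exact mul_nonneg (G.mu_pos x).le (add_nonneg (Real.rpow_nonneg (Real.sqrt_nonneg _) q)
      (mul_nonneg h2x.le (Real.rpow_nonneg (abs_nonneg _) q)))
  have hSp0 : 0 ≤ Sp := tsum_nonneg htermp
  have hSq0 : 0 ≤ Sq := tsum_nonneg htermq
  have hA : A = Sp ^ (1/p) := rfl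
  have hB : B = Sq ^ (1/q) := rfl
  have hA0 : 0 ≤ A := Real.rpow_nonneg hSp0 _
  have hB0 : 0 ≤ B := Real.rpow_nonneg hSq0 _
  have hApow : A ^ p = Sp := by
    rw [hA, ← Real.rpow_mul hSp0, one_div, inv_mul_cancel₀ hpne, Real.rpow_one]
  have hBpow : B ^ q = Sq := by
    rw [hB, ← Real.rpow_mul hSq0, one_div, inv_mul_cancel₀ hqne, Real.rpow_one]
  -- summability and bounds for μ|u|^p, μ|v|^q
  have hupt : ∀ x, 0 ≤ G.μ x * |u x| ^ p := fun x =>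
    mul_nonneg (G.mu_pos x).le (Real.rpow_nonneg (abs_nonneg _) _)
  have hvqt : ∀ x, 0 ≤ G.μ x * |v x| ^ q := fun x =>
    mul_nonneg (G.mu_pos x).le (Real.rpow_nonneg (abs_nonneg _) _)
  have hup_le_term : ∀ x, h0 * (G.μ x * |u x| ^ p) ≤
      G.μ x * (G.grad u x ^ p + h1 x * |u x| ^ p) := fun x => by
    have h1x := hh1 x
    have hμx := (G.mu_pos x).le
    have hg : 0 ≤ G.grad u x ^ p := Real.rpow_nonneg (Real.sqrt_nonneg _) _
    have hux : 0 ≤ |u x| ^ p := Real.rpow_nonneg (abs_nonneg _) _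
    nlinarith [mul_nonneg hμx hg, mul_nonneg (mul_nonneg hμx hux) (by linarith : (0:ℝ) ≤ h1 x - h0)]
  have hvq_le_term : ∀ x, h0 * (G.μ x * |v x| ^ q) ≤
      G.μ x * (G.grad v x ^ q + h2 x * |v x| ^ q) := fun x => by
    have h2x := hh2 x
    have hμx := (G.mu_pos x).le
    have hg : 0 ≤ G.grad v x ^ q := Real.rpow_nonneg (Real.sqrt_nonneg _) _
    have hvx : 0 ≤ |v x| ^ q := Real.rpow_nonneg (abs_nonneg _) _
    nlinarith [mul_nonneg hμx hg, mul_nonneg (mul_nonneg hμx hvx) (by linarith : (0:ℝ) ≤ h2 x - h0)]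
  have husum : Summable fun x => G.μ x * |u x| ^ p := by
    refine Summable.of_nonneg_of_le hupt (fun x => ?_) (hu.mul_left (1/h0))
    rw [one_div, inv_mul_eq_div, le_div_iff₀' hh0]
    exact hup_le_term x
  have hvsum : Summable fun x => G.μ x * |v x| ^ q := by
    refine Summable.of_nonneg_of_le hvqt (fun x => ?_) (hv.mul_left (1/h0))
    rw [one_div, inv_mul_eq_div, le_div_iff₀' hh0]
    exact hvq_le_term x
  have hup_tsum : ∑' x, G.μ x * |u x| ^ p ≤ Sp / h0 := by
    rw [le_div_iff₀' hh0, ← tsum_mul_left]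
    exact Summable.tsum_le_tsum hup_le_term (husum.mul_left h0) hu
  have hvq_tsum : ∑' x, G.μ x * |v x| ^ q ≤ Sq / h0 := by
    rw [le_div_iff₀' hh0, ← tsum_mul_left]
    exact Summable.tsum_le_tsum hvq_le_term (hvsum.mul_left h0) hv
  -- pointwise smallness
  set m := min ((h0 * μ0) ^ (1/p)) ((h0 * μ0) ^ (1/q)) with hmdef
  have hm : 0 < m := lt_min (Real.rpow_pos_of_pos (by positivity) _)
    (Real.rpow_pos_of_pos (by positivity) _)
  have hball' : A + B ≤ l0 / 2 * m := le_trans hball (min_le_left _ _)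
  have hAB1 : A + B ≤ 1 := le_trans hball (min_le_right _ _)
  have hux : ∀ x, |u x| ≤ A / m := fun x => by
    have h1' : h0 * μ0 * |u x| ^ p ≤ Sp := by
      calc h0 * μ0 * |u x| ^ p ≤ h0 * (G.μ x * |u x| ^ p) := by
            have key := mul_nonneg (mul_nonneg hh0.le (sub_nonneg.2 (hμ x)))
              (Real.rpow_nonneg (abs_nonneg (u x)) p)
            nlinarith [key]
        _ ≤ G.μ x * (G.grad u x ^ p + h1 x * |u x| ^ p) := hup_le_term x
        _ ≤ Sp := Summable.le_tsum hu x fun y _ => htermp y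
    have h2' : |u x| ^ p ≤ Sp / (h0 * μ0) := (le_div_iff₀' (by positivity)).2 h1'
    have h3' : |u x| = (|u x| ^ p) ^ (1/p) := by
      rw [← Real.rpow_mul (abs_nonneg _), mul_one_div, div_self hpne, Real.rpow_one]
    rw [h3']
    calc (|u x| ^ p) ^ (1/p) ≤ (Sp / (h0 * μ0)) ^ (1/p) :=
          Real.rpow_le_rpow (Real.rpow_nonneg (abs_nonneg _) _) h2' (by positivity)
      _ = A / (h0 * μ0) ^ (1/p) := by rw [Real.div_rpow hSp0 (by positivity), hA]
      _ ≤ A / m := div_le_div_of_nonneg_left hA0 hm (min_le_left _ _)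
  have hvx : ∀ x, |v x| ≤ B / m := fun x => by
    have h1' : h0 * μ0 * |v x| ^ q ≤ Sq := by
      calc h0 * μ0 * |v x| ^ q ≤ h0 * (G.μ x * |v x| ^ q) := by
            have key := mul_nonneg (mul_nonneg hh0.le (sub_nonneg.2 (hμ x)))
              (Real.rpow_nonneg (abs_nonneg (v x)) q)
            nlinarith [key]
        _ ≤ G.μ x * (G.grad v x ^ q + h2 x * |v x| ^ q) := hvq_le_term x
        _ ≤ Sq := Summable.le_tsum hv x fun y _ => htermq y
    have h2' : |v x| ^ q ≤ Sq / (h0 * μ0) := (le_div_iff₀' (by positivity)).2 h1'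
    have h3' : |v x| = (|v x| ^ q) ^ (1/q) := by
      rw [← Real.rpow_mul (abs_nonneg _), mul_one_div, div_self hqne, Real.rpow_one]
    rw [h3']
    calc (|v x| ^ q) ^ (1/q) ≤ (Sq / (h0 * μ0)) ^ (1/q) :=
          Real.rpow_le_rpow (Real.rpow_nonneg (abs_nonneg _) _) h2' (by positivity)
      _ = B / (h0 * μ0) ^ (1/q) := by rw [Real.div_rpow hSq0 (by positivity), hB]
      _ ≤ B / m := div_le_div_of_nonneg_left hB0 hm (min_le_right _ _)
  have hsmall : ∀ x, |u x| + |v x| ≤ l0 / 2 := fun x => by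
    have k1 := hux x
    have k2 := hvx x
    have hdiv : (A + B) / m ≤ l0 / 2 := by rw [div_le_iff₀ hm]; linarith
    calc |u x| + |v x| ≤ (A + B) / m := by rw [add_div]; linarith
      _ ≤ l0 / 2 := hdiv
  -- pointwise bound on F
  have hsqrt : ∀ a b : ℝ, Real.sqrt (a^2 + b^2) ≤ |a| + |b| := fun a b => by
    have h1' : a^2 + b^2 ≤ (|a| + |b|)^2 := by
      nlinarith [sq_abs a, sq_abs b, mul_nonneg (abs_nonneg a) (abs_nonneg b)]
    calc Real.sqrt (a^2 + b^2) ≤ Real.sqrt ((|a| + |b|)^2) := Real.sqrt_le_sqrt h1'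
      _ = |a| + |b| := Real.sqrt_sq (by positivity)
  have hFb : ∀ x, |F x (u x) (v x)| ≤
      c * (2/p * |u x| ^ p + ((p-1)/p + 1/q) * |v x| ^ q) := by
    intro x
    obtain ⟨hds, hdt, _, _⟩ := hC1 x
    have hst := hsmall x
    have hF1 : |F x (u x) (v x) - F x 0 (v x)| ≤
        c * |u x| ^ p / p + (c * |v x| ^ (q * (p - 1) / p)) * |u x| := by
      refine aux_mvt hp1.le hc.le (by positivity) (fun r => hds r (v x)) (u x) (fun r hr => ?_)
      have hlt : Real.sqrt (r^2 + (v x)^2) < l0 := by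
        calc Real.sqrt (r^2 + (v x)^2) ≤ |r| + |v x| := hsqrt r (v x)
          _ ≤ l0 / 2 := by linarith
          _ < l0 := by linarith
      have hthis := hFs x r (v x) hlt
      rw [mul_add] at hthis
      exact hthis
    have hF2 : |F x 0 (v x) - F x 0 0| ≤ c * |v x| ^ q / q + 0 * |v x| := by
      refine aux_mvt hq1.le hc.le le_rfl (fun r => hdt 0 r) (v x) (fun r hr => ?_)
      have hlt : Real.sqrt ((0:ℝ)^2 + r^2) < l0 := by
        calc Real.sqrt ((0:ℝ)^2 + r^2) ≤ |(0:ℝ)| + |r| := hsqrt 0 r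
          _ = |r| := by simp
          _ ≤ |v x| := hr
          _ ≤ l0 / 2 := by linarith [abs_nonneg (u x)]
          _ < l0 := by linarith
      have hthis := hFt x 0 r hlt
      rw [abs_zero, Real.zero_rpow hpne, zero_add] at hthis
      linarith
    have hyoung : |u x| * |v x| ^ (q * (p - 1) / p) ≤
        |u x| ^ p / p + |v x| ^ q * ((p-1)/p) := by
      have hconj : p.HolderConjugate (p/(p-1)) := Real.HolderConjugate.conjExponent hp1
      have h := Real.young_inequality_of_nonneg (abs_nonneg (u x))
        (Real.rpow_nonneg (abs_nonneg (v x)) (q * (p - 1) / p)) hconj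
      rw [← Real.rpow_mul (abs_nonneg (v x))] at h
      have hexp : q * (p - 1) / p * (p/(p-1)) = q := by
        rw [div_mul_div_comm, mul_comm p (p-1), mul_div_mul_right _ _ hpne,
          mul_div_assoc, div_self (sub_ne_zero.2 (ne_of_gt hp1)), mul_one]
      rw [hexp, div_div_eq_mul_div] at h
      rw [← mul_div_assoc]
      exact h
    have htri : |F x (u x) (v x)| ≤
        |F x (u x) (v x) - F x 0 (v x)| + |F x 0 (v x) - F x 0 0| := by
      have h00 := hF00 x
      calc |F x (u x) (v x)|
          = |(F x (u x) (v x) - F x 0 (v x)) + (F x 0 (v x) - F x 0 0)| := by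
            congr 1; rw [h00]; ring
        _ ≤ _ := abs_add_le _ _
    have hy' := mul_le_mul_of_nonneg_left hyoung hc.le
    have heq : (c * |v x| ^ (q * (p - 1) / p)) * |u x|
        = c * (|u x| * |v x| ^ (q * (p - 1) / p)) := by ring
    calc |F x (u x) (v x)| ≤ _ := htri
      _ ≤ (c * |u x| ^ p / p + (c * |v x| ^ (q * (p - 1) / p)) * |u x|)
          + (c * |v x| ^ q / q + 0 * |v x|) := add_le_add hF1 hF2
      _ ≤ (c * |u x| ^ p / p + c * (|u x| ^ p / p + |v x| ^ q * ((p-1)/p)))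
          + c * |v x| ^ q / q := by rw [heq]; linarith
      _ = c * (2/p * |u x| ^ p + ((p-1)/p + 1/q) * |v x| ^ q) := by
          field_simp
          ring
  -- summability of the F-term
  have hcb1 : c * (2/p) ≤ h0 := by
    rw [hcdef, div_mul_div_comm, div_le_iff₀ (by positivity)]
    have h2' : (2:ℝ) ≤ (q+1)*p := by nlinarith
    exact mul_le_mul_of_nonneg_left h2' hh0.le
  have hcb2 : c * ((p-1)/p + 1/q) ≤ h0 := by
    have hb1 : (p-1)/p ≤ 1 := by rw [div_le_one hp0]; linarith
    have hb2 : 1/q ≤ 1 := by rw [div_le_one hq0]; linarith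
    calc c * ((p-1)/p + 1/q) ≤ c * (q + 1) := by
          apply mul_le_mul_of_nonneg_left _ hc.le
          linarith
      _ = h0 := by rw [hcdef]; field_simp
  have hFabs_le : ∀ x, |G.μ x * F x (u x) (v x)| ≤
      G.μ x * (G.grad u x ^ p + h1 x * |u x| ^ p)
      + G.μ x * (G.grad v x ^ q + h2 x * |v x| ^ q) := fun x => by
    rw [abs_mul, abs_of_pos (G.mu_pos x)]
    have hb := mul_le_mul_of_nonneg_left (hFb x) (G.mu_pos x).le
    have hX := hupt x
    have hY := hvqt x
    have k1 : G.μ x * (c * (2/p * |u x| ^ p + ((p-1)/p + 1/q) * |v x| ^ q))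
        = (c * (2/p)) * (G.μ x * |u x| ^ p)
          + (c * ((p-1)/p + 1/q)) * (G.μ x * |v x| ^ q) := by ring
    have k2 : (c * (2/p)) * (G.μ x * |u x| ^ p) ≤ h0 * (G.μ x * |u x| ^ p) :=
      mul_le_mul_of_nonneg_right hcb1 hX
    have k3 : (c * ((p-1)/p + 1/q)) * (G.μ x * |v x| ^ q) ≤ h0 * (G.μ x * |v x| ^ q) :=
      mul_le_mul_of_nonneg_right hcb2 hY
    have k4 := hup_le_term x
    have k5 := hvq_le_term x
    rw [k1] at hb
    linarith
  have hFsum : Summable fun x => G.μ x * F x (u x) (v x) :=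
    Summable.of_abs (Summable.of_nonneg_of_le (fun x => abs_nonneg _) hFabs_le (hu.add hv))
  -- bound on the F-term tsum
  have hTF : ∑' x, G.μ x * F x (u x) (v x)
      ≤ c * (2/p) * (Sp / h0) + c * ((p-1)/p + 1/q) * (Sq / h0) := by
    have step1 : ∑' x, G.μ x * F x (u x) (v x)
        ≤ ∑' x, ((c * (2/p)) * (G.μ x * |u x| ^ p)
            + (c * ((p-1)/p + 1/q)) * (G.μ x * |v x| ^ q)) := by
      refine Summable.tsum_le_tsum (fun x => ?_) hFsum
        ((husum.mul_left _).add (hvsum.mul_left _))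
      have h2' : G.μ x * F x (u x) (v x) ≤ G.μ x * |F x (u x) (v x)| :=
        mul_le_mul_of_nonneg_left (le_abs_self _) (G.mu_pos x).le
      have h3' := mul_le_mul_of_nonneg_left (hFb x) (G.mu_pos x).le
      have k1 : G.μ x * (c * (2/p * |u x| ^ p + ((p-1)/p + 1/q) * |v x| ^ q))
          = (c * (2/p)) * (G.μ x * |u x| ^ p)
            + (c * ((p-1)/p + 1/q)) * (G.μ x * |v x| ^ q) := by ring
      linarith [k1 ▸ h3']
    have step2 : ∑' x, ((c * (2/p)) * (G.μ x * |u x| ^ p)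
            + (c * ((p-1)/p + 1/q)) * (G.μ x * |v x| ^ q))
        = (c * (2/p)) * (∑' x, G.μ x * |u x| ^ p)
          + (c * ((p-1)/p + 1/q)) * (∑' x, G.μ x * |v x| ^ q) := by
      rw [Summable.tsum_add ((husum.mul_left _)) ((hvsum.mul_left _)), tsum_mul_left, tsum_mul_left]
    have step3 : (c * (2/p)) * (∑' x, G.μ x * |u x| ^ p) ≤ c * (2/p) * (Sp / h0) :=
      mul_le_mul_of_nonneg_left hup_tsum (by positivity)
    have step4 : (c * ((p-1)/p + 1/q)) * (∑' x, G.μ x * |v x| ^ q)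
        ≤ c * ((p-1)/p + 1/q) * (Sq / h0) := by
      exact mul_le_mul_of_nonneg_left hvq_tsum (mul_nonneg hc.le
        (add_nonneg (div_nonneg (by linarith) hp0.le) (by positivity)))
    calc ∑' x, G.μ x * F x (u x) (v x) ≤ _ := step1
      _ = _ := step2
      _ ≤ _ := add_le_add step3 step4
  -- the e-terms
  have hconjp : p.HolderConjugate (p/(p-1)) := Real.HolderConjugate.conjExponent hp1
  have hconjq : q.HolderConjugate (q/(q-1)) := Real.HolderConjugate.conjExponent hq1
  have hE1 := aux_holder hconjp G.mu_pos (fun x => abs_nonneg (e1 x))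
    (fun x => abs_nonneg (u x)) he1L husum
  have hE2 := aux_holder hconjq G.mu_pos (fun x => abs_nonneg (e2 x))
    (fun x => abs_nonneg (v x)) he2L hvsum
  have hEptw : ∀ x, G.μ x * (e1 x * u x + e2 x * v x)
      ≤ G.μ x * (|e1 x| * |u x|) + G.μ x * (|e2 x| * |v x|) := fun x => by
    have habs : e1 x * u x + e2 x * v x ≤ |e1 x| * |u x| + |e2 x| * |v x| := by
      calc e1 x * u x + e2 x * v x ≤ |e1 x * u x + e2 x * v x| := le_abs_self _
        _ ≤ |e1 x * u x| + |e2 x * v x| := abs_add_le _ _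
        _ = |e1 x| * |u x| + |e2 x| * |v x| := by rw [abs_mul, abs_mul]
    have := mul_le_mul_of_nonneg_left habs (G.mu_pos x).le
    linarith [this, mul_add (G.μ x) (|e1 x| * |u x|) (|e2 x| * |v x|)]
  have hEsum : Summable fun x => G.μ x * (e1 x * u x + e2 x * v x) := by
    apply Summable.of_abs
    refine Summable.of_nonneg_of_le (fun x => abs_nonneg _) (fun x => ?_) (hE1.1.add hE2.1)
    rw [abs_mul, abs_of_pos (G.mu_pos x)]
    have habs : |e1 x * u x + e2 x * v x| ≤ |e1 x| * |u x| + |e2 x| * |v x| := by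
      calc |e1 x * u x + e2 x * v x| ≤ |e1 x * u x| + |e2 x * v x| := abs_add_le _ _
        _ = |e1 x| * |u x| + |e2 x| * |v x| := by rw [abs_mul, abs_mul]
    have := mul_le_mul_of_nonneg_left habs (G.mu_pos x).le
    linarith [mul_add (G.μ x) (|e1 x| * |u x|) (|e2 x| * |v x|)]
  have hTu : (∑' x, G.μ x * |u x| ^ p) ^ (1/p) ≤ h0 ^ (-(1/p)) * A := by
    calc (∑' x, G.μ x * |u x| ^ p) ^ (1/p) ≤ (Sp / h0) ^ (1/p) :=
          Real.rpow_le_rpow (tsum_nonneg hupt) hup_tsum (by positivity)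
      _ = Sp ^ (1/p) / h0 ^ (1/p) := Real.div_rpow hSp0 hh0.le _
      _ = h0 ^ (-(1/p)) * A := by
          rw [Real.rpow_neg hh0.le, hA, div_eq_mul_inv, mul_comm]
  have hTv : (∑' x, G.μ x * |v x| ^ q) ^ (1/q) ≤ h0 ^ (-(1/q)) * B := by
    calc (∑' x, G.μ x * |v x| ^ q) ^ (1/q) ≤ (Sq / h0) ^ (1/q) :=
          Real.rpow_le_rpow (tsum_nonneg hvqt) hvq_tsum (by positivity)
      _ = Sq ^ (1/q) / h0 ^ (1/q) := Real.div_rpow hSq0 hh0.le _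
      _ = h0 ^ (-(1/q)) * B := by
          rw [Real.rpow_neg hh0.le, hB, div_eq_mul_inv, mul_comm]
  have hN1 : 0 ≤ G.lpNorm (p/(p-1)) e1 :=
    Real.rpow_nonneg (tsum_nonneg fun x =>
      mul_nonneg (G.mu_pos x).le (Real.rpow_nonneg (abs_nonneg _) _)) _
  have hN2 : 0 ≤ G.lpNorm (q/(q-1)) e2 :=
    Real.rpow_nonneg (tsum_nonneg fun x =>
      mul_nonneg (G.mu_pos x).le (Real.rpow_nonneg (abs_nonneg _) _)) _
  set Cm := max (h0 ^ (-(1/p)) * G.lpNorm (p/(p-1)) e1)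
    (h0 ^ (-(1/q)) * G.lpNorm (q/(q-1)) e2) with hCm
  have hTE2 : ∑' x, G.μ x * (e1 x * u x + e2 x * v x) ≤ Cm * (A + B) := by
    have st1 : ∑' x, G.μ x * (e1 x * u x + e2 x * v x)
        ≤ ∑' x, (G.μ x * (|e1 x| * |u x|) + G.μ x * (|e2 x| * |v x|)) :=
      Summable.tsum_le_tsum hEptw hEsum (hE1.1.add hE2.1)
    have st2 : ∑' x, (G.μ x * (|e1 x| * |u x|) + G.μ x * (|e2 x| * |v x|))
        = (∑' x, G.μ x * (|e1 x| * |u x|)) + ∑' x, G.μ x * (|e2 x| * |v x|) :=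
      Summable.tsum_add hE1.1 hE2.1
    have st3 := hE1.2
    have st4 := hE2.2
    have st5 : G.lpNorm (p/(p-1)) e1 * (∑' x, G.μ x * |u x| ^ p) ^ (1/p)
        ≤ G.lpNorm (p/(p-1)) e1 * (h0 ^ (-(1/p)) * A) :=
      mul_le_mul_of_nonneg_left hTu hN1
    have st6 : G.lpNorm (q/(q-1)) e2 * (∑' x, G.μ x * |v x| ^ q) ^ (1/q)
        ≤ G.lpNorm (q/(q-1)) e2 * (h0 ^ (-(1/q)) * B) :=
      mul_le_mul_of_nonneg_left hTv hN2
    have st7 : G.lpNorm (p/(p-1)) e1 * (h0 ^ (-(1/p)) * A) ≤ Cm * A := by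
      rw [show G.lpNorm (p/(p-1)) e1 * (h0 ^ (-(1/p)) * A)
        = (h0 ^ (-(1/p)) * G.lpNorm (p/(p-1)) e1) * A by ring]
      exact mul_le_mul_of_nonneg_right (le_max_left _ _) hA0
    have st8 : G.lpNorm (q/(q-1)) e2 * (h0 ^ (-(1/q)) * B) ≤ Cm * B := by
      rw [show G.lpNorm (q/(q-1)) e2 * (h0 ^ (-(1/q)) * B)
        = (h0 ^ (-(1/q)) * G.lpNorm (q/(q-1)) e2) * B by ring]
      exact mul_le_mul_of_nonneg_right (le_max_right _ _) hB0
    calc ∑' x, G.μ x * (e1 x * u x + e2 x * v x) ≤ _ := st1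
      _ = _ := st2
      _ ≤ Cm * A + Cm * B := by
          have := le_trans st3 st5
          have := le_trans st4 st6
          linarith [le_trans st3 (le_trans st5 st7), le_trans st4 (le_trans st6 st8)]
      _ = Cm * (A + B) := by ring
  -- main coefficient computation
  have hmain1 : 1/p * Sp + 1/q * Sq
      - (c * (2/p) * (Sp / h0) + c * ((p-1)/p + 1/q) * (Sq / h0))
      - (1/(p*(q+1))) * (Sp + Sq) = ((q-2)/(p*(q+1))) * Sp := by
    rw [hcdef]
    field_simp
    ring
  have hmain : (1/(p*(q+1))) * (Sp + Sq)
      ≤ 1/p * Sp + 1/q * Sq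
        - (c * (2/p) * (Sp / h0) + c * ((p-1)/p + 1/q) * (Sq / h0)) := by
    have hcoef : 0 ≤ (q-2)/(p*(q+1)) := div_nonneg (by linarith) (by positivity)
    nlinarith [mul_nonneg hcoef hSp0]
  -- power comparison
  have hM1 : (1:ℝ) ≤ max p q := le_trans (by linarith) (le_max_left p q)
  have hMne : max p q ≠ 0 := by positivity
  have hA1 : A ≤ 1 := by linarith
  have hB1 : B ≤ 1 := by linarith
  have hAM : A ^ (max p q) ≤ Sp := by
    rcases eq_or_lt_of_le hA0 with h | h
    · rw [← h, Real.zero_rpow hMne]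
      exact hSp0
    · calc A ^ (max p q) ≤ A ^ p :=
            Real.rpow_le_rpow_of_exponent_ge h hA1 (le_max_left p q)
        _ = Sp := hApow
  have hBM : B ^ (max p q) ≤ Sq := by
    rcases eq_or_lt_of_le hB0 with h | h
    · rw [← h, Real.zero_rpow hMne]
      exact hSq0
    · calc B ^ (max p q) ≤ B ^ q :=
            Real.rpow_le_rpow_of_exponent_ge h hB1 (le_max_right p q)
        _ = Sq := hBpow
  have h2M : (0:ℝ) < 2 ^ (max p q - 1) := Real.rpow_pos_of_pos two_pos _
  have hpow : (A + B) ^ (max p q) ≤ 2 ^ (max p q - 1) * (Sp + Sq) := by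
    calc (A + B) ^ (max p q) ≤ 2 ^ (max p q - 1) * (A ^ (max p q) + B ^ (max p q)) :=
          aux_two_pow hM1 hA0 hB0
      _ ≤ 2 ^ (max p q - 1) * (Sp + Sq) := by
          apply mul_le_mul_of_nonneg_left _ h2M.le
          linarith
  have hpqp : (0:ℝ) < p * q + p := by positivity
  have hconst : (min 1 (q-1) / (2 ^ (max p q - 1) * (p*q+p))) * (A+B) ^ (max p q)
      ≤ (1/(p*(q+1))) * (Sp + Sq) := by
    rw [min_eq_left (by linarith : (1:ℝ) ≤ q - 1)]
    calc (1 / (2 ^ (max p q - 1) * (p*q+p))) * (A+B) ^ (max p q)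
        ≤ (1 / (2 ^ (max p q - 1) * (p*q+p))) * (2 ^ (max p q - 1) * (Sp + Sq)) :=
          mul_le_mul_of_nonneg_left hpow (by positivity)
      _ = (1/(p*(q+1))) * (Sp + Sq) := by
          field_simp
  refine ⟨hFsum, hEsum, ?_⟩
  have henergy : G.energy p q lam h1 h2 e1 e2 F u v
      = 1/p * Sp + 1/q * Sq - (∑' x, G.μ x * F x (u x) (v x))
        - lam * (∑' x, G.μ x * (e1 x * u x + e2 x * v x)) := rfl
  rw [ge_iff_le, henergy]
  have hTE3 : lam * (∑' x, G.μ x * (e1 x * u x + e2 x * v x)) ≤ lam * (Cm * (A + B)) :=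
    mul_le_mul_of_nonneg_left hTE2 hlam.le
  have heq2 : lam * Cm * (A + B) = lam * (Cm * (A + B)) := by ring
  linarith [hTF, hmain, hconst, hTE3]
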